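/- Lax form of the equations of motion in the rational case: let x_i : ℝ → ℂ be twice differentiable with x_i(t) ≠ x_j(t) for all t and i ≠ j, let a_i, b_i : ℝ → ℂˡ be differentiable, λ_i : ℝ → ℂ, and set f_{ij}(t) = b_i(t)·a_j(t). Assume that for all t: (i) b_i·a_i = 2; (ii) ẍ_i = −2·Σ_{j≠i} f_{ij}f_{ji}/(x_i−x_j)³; (iii) ȧ_i = −Σ_{j≠i} a_j·f_{ji}/(x_i−x_j)² − λ_i a_i; (iv) ḃ_i = Σ_{j≠i} b_j·f_{ij}/(x_i−x_j)² + λ_i b_i. Then for every z ∈ ℂ with z ≠ 0, the matrices L(t) with entries L_{ii} = ẋ_i − 2/z, L_{ij} = f_{ij}(1/(x_i−x_j) − 1/z) (i ≠ j), and M(t) with entries M_{ii} = −λ_i, M_{ij} = −f_{ij}/(x_i−x_j)² (i ≠ j), satisfy dL/dt = L·M − M·L. -/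

import Mathlib

open Finset

set_option maxHeartbeats 1000000 in
/-- Lax form `dL/dt = [L,M]` of the equations of motion of the rational spin
Calogero–Moser system. -/
theorem rational_lax_form (N l : ℕ)
    (x x' : Fin N → ℝ → ℂ) (a b : Fin N → ℝ → Fin l → ℂ) (lam : Fin N → ℝ → ℂ)
    (hxne : ∀ (t : ℝ) (i j : Fin N), i ≠ j → x i t ≠ x j t)
    (hx : ∀ (i : Fin N) (t : ℝ), HasDerivAt (x i) (x' i t) t)
    (hba : ∀ (i : Fin N) (t : ℝ), (∑ α : Fin l, b i t α * a i t α) = 2)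
    (hacc : ∀ (i : Fin N) (t : ℝ), HasDerivAt (x' i)
      (-2 * ∑ j ∈ Finset.univ.erase i,
        (∑ α : Fin l, b i t α * a j t α) * (∑ α : Fin l, b j t α * a i t α)
          / (x i t - x j t) ^ 3) t)
    (ha : ∀ (i : Fin N) (t : ℝ), HasDerivAt (a i)
      (-(∑ j ∈ Finset.univ.erase i,
          ((∑ α : Fin l, b j t α * a i t α) / (x i t - x j t) ^ 2) • a j t)
        - lam i t • a i t) t)
    (hb : ∀ (i : Fin N) (t : ℝ), HasDerivAt (b i)
      ((∑ j ∈ Finset.univ.erase i,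
          ((∑ α : Fin l, b i t α * a j t α) / (x i t - x j t) ^ 2) • b j t)
        + lam i t • b i t) t) :
    ∀ z : ℂ, z ≠ 0 →
      let f : Fin N → Fin N → ℝ → ℂ := fun i j t => ∑ α : Fin l, b i t α * a j t α
      let L : ℝ → Matrix (Fin N) (Fin N) ℂ := fun t => Matrix.of fun i j =>
        if i = j then x' i t - 2 / z
        else f i j t * (1 / (x i t - x j t) - 1 / z)
      let M : ℝ → Matrix (Fin N) (Fin N) ℂ := fun t => Matrix.of fun i j =>
        if i = j then -lam i t else -f i j t / (x i t - x j t) ^ 2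
      ∀ (t : ℝ) (i j : Fin N),
        HasDerivAt (fun s => L s i j) ((L t * M t - M t * L t) i j) t := by
  intro z hz f L M t i j
  have hne : ∀ p q : Fin N, p ≠ q → x p t - x q t ≠ 0 := fun p q h =>
    sub_ne_zero.mpr (hxne t p q h)
  -- two sum-swapping identities
  have key1 : ∀ (s : Finset (Fin N)) (c : Fin N → ℂ) (u : Fin N → Fin l → ℂ)
      (w : Fin l → ℂ),
      ∑ α : Fin l, (∑ k ∈ s, c k * u k α) * w α
        = ∑ k ∈ s, c k * ∑ α : Fin l, u k α * w α := by
    intro s c u w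
    simp_rw [Finset.sum_mul, mul_assoc]
    rw [Finset.sum_comm]
    simp_rw [← Finset.mul_sum]
  have key2 : ∀ (s : Finset (Fin N)) (c : Fin N → ℂ) (u : Fin N → Fin l → ℂ)
      (w : Fin l → ℂ),
      ∑ α : Fin l, w α * (∑ k ∈ s, c k * u k α)
        = ∑ k ∈ s, c k * ∑ α : Fin l, w α * u k α := by
    intro s c u w
    simp_rw [Finset.mul_sum]
    rw [Finset.sum_comm]
    exact Finset.sum_congr rfl fun k _ => Finset.sum_congr rfl fun α _ => by ring
  -- component derivatives
  have haC : ∀ (p : Fin N) (α : Fin l), HasDerivAt (fun s => a p s α)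
      ((-(∑ k ∈ Finset.univ.erase p,
          ((∑ β : Fin l, b k t β * a p t β) / (x p t - x k t) ^ 2) • a k t)
        - lam p t • a p t) α) t := fun p α => (hasDerivAt_pi.mp (ha p t)) α
  have hbC : ∀ (p : Fin N) (α : Fin l), HasDerivAt (fun s => b p s α)
      (((∑ k ∈ Finset.univ.erase p,
          ((∑ β : Fin l, b p t β * a k t β) / (x p t - x k t) ^ 2) • b k t)
        + lam p t • b p t) α) t := fun p α => (hasDerivAt_pi.mp (hb p t)) α
  -- derivative of f p q
  have hf : ∀ p q : Fin N, HasDerivAt (fun s => ∑ α : Fin l, b p s α * a q s α)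
      ((∑ k ∈ Finset.univ.erase p,
          (∑ α : Fin l, b p t α * a k t α) * (∑ α : Fin l, b k t α * a q t α)
            / (x p t - x k t) ^ 2)
        - (∑ k ∈ Finset.univ.erase q,
          (∑ α : Fin l, b p t α * a k t α) * (∑ α : Fin l, b k t α * a q t α)
            / (x q t - x k t) ^ 2)
        + (lam p t - lam q t) * (∑ α : Fin l, b p t α * a q t α)) t := by
    intro p q
    have h1 : HasDerivAt (fun s => ∑ α : Fin l, b p s α * a q s α)
        (∑ α : Fin l,
          ((((∑ k ∈ Finset.univ.erase p,
              ((∑ β : Fin l, b p t β * a k t β) / (x p t - x k t) ^ 2) • b k t)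
            + lam p t • b p t) α) * a q t α
          + b p t α *
            ((-(∑ k ∈ Finset.univ.erase q,
              ((∑ β : Fin l, b k t β * a q t β) / (x q t - x k t) ^ 2) • a k t)
            - lam q t • a q t) α))) t :=
      HasDerivAt.fun_sum fun α _ => (hbC p α).mul (haC q α)
    convert h1 using 1
    simp only [Pi.add_apply, Pi.sub_apply, Pi.neg_apply, Pi.smul_apply, Finset.sum_apply,
      smul_eq_mul]
    simp_rw [add_mul, mul_sub, mul_neg]
    simp_rw [Finset.sum_add_distrib, Finset.sum_sub_distrib, Finset.sum_neg_distrib]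
    rw [key1 (Finset.univ.erase p) (fun k => (∑ β : Fin l, b p t β * a k t β) / (x p t - x k t) ^ 2)
        (fun k => b k t) (a q t),
      key2 (Finset.univ.erase q) (fun k => (∑ β : Fin l, b k t β * a q t β) / (x q t - x k t) ^ 2)
        (fun k => a k t) (b p t)]
    rw [show (∑ α : Fin l, lam p t * b p t α * a q t α)
        = lam p t * ∑ α : Fin l, b p t α * a q t α by
      rw [Finset.mul_sum]; exact Finset.sum_congr rfl fun α _ => by ring]
    rw [show (∑ α : Fin l, b p t α * (lam q t * a q t α))
        = lam q t * ∑ α : Fin l, b p t α * a q t α by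
      rw [Finset.mul_sum]; exact Finset.sum_congr rfl fun α _ => by ring]
    rw [show (∑ k ∈ Finset.univ.erase p,
          (∑ α : Fin l, b p t α * a k t α) * (∑ α : Fin l, b k t α * a q t α)
            / (x p t - x k t) ^ 2)
        = ∑ k ∈ Finset.univ.erase p,
          (∑ β : Fin l, b p t β * a k t β) / (x p t - x k t) ^ 2
            * ∑ α : Fin l, b k t α * a q t α from
      Finset.sum_congr rfl fun k _ => by ring]
    rw [show (∑ k ∈ Finset.univ.erase q,
          (∑ α : Fin l, b p t α * a k t α) * (∑ α : Fin l, b k t α * a q t α)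
            / (x q t - x k t) ^ 2)
        = ∑ k ∈ Finset.univ.erase q,
          (∑ β : Fin l, b k t β * a q t β) / (x q t - x k t) ^ 2
            * ∑ α : Fin l, b p t α * a k t α from
      Finset.sum_congr rfl fun k _ => by ring]
    ring
  -- now the main goal
  by_cases hij : i = j
  · subst hij
    have hLfun : (fun s => L s i i) = fun s => x' i s - 2 / z := by
      funext s; simp [L, Matrix.of_apply]
    rw [hLfun]
    refine ((hacc i t).sub_const (2 / z)).congr_deriv ?_
    symm
    rw [Matrix.sub_apply, Matrix.mul_apply, Matrix.mul_apply, ← Finset.sum_sub_distrib,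
      ← Finset.add_sum_erase _ _ (Finset.mem_univ i)]
    have h0 : L t i i * M t i i - M t i i * L t i i = 0 := by ring
    rw [h0, zero_add, Finset.mul_sum]
    refine Finset.sum_congr rfl fun k hk => ?_
    have hki : k ≠ i := Finset.ne_of_mem_erase hk
    simp only [L, M, f, Matrix.of_apply, if_neg (Ne.symm hki), if_neg hki]
    have h1 := hne i k (Ne.symm hki)
    have h2 := hne k i hki
    field_simp
    ring
  · -- off-diagonal case
    have hjmem : j ∈ Finset.univ.erase i :=
      Finset.mem_erase.mpr ⟨Ne.symm hij, Finset.mem_univ j⟩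
    have himem : i ∈ Finset.univ.erase j :=
      Finset.mem_erase.mpr ⟨hij, Finset.mem_univ i⟩
    have hwd : HasDerivAt (fun s => 1 / (x i s - x j s) - 1 / z)
        (-(x' i t - x' j t) / (x i t - x j t) ^ 2) t := by
      have h1 := ((hasDerivAt_const t (1 : ℂ)).div ((hx i t).sub (hx j t))
        (hne i j hij)).sub_const (1 / z)
      refine h1.congr_deriv ?_
      simp only [Pi.sub_apply]
      ring
    have hder := (hf i j).mul hwd
    have hLfun : (fun s => L s i j)
        = fun s => (∑ α : Fin l, b i s α * a j s α) * (1 / (x i s - x j s) - 1 / z) := by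
      funext s; simp [L, f, Matrix.of_apply, if_neg hij]
    rw [hLfun]
    refine hder.congr_deriv ?_
    symm
    rw [Matrix.sub_apply, Matrix.mul_apply, Matrix.mul_apply, ← Finset.sum_sub_distrib,
      ← Finset.add_sum_erase _ _ (Finset.mem_univ i),
      ← Finset.add_sum_erase _ _ hjmem,
      ← Finset.add_sum_erase (Finset.univ.erase i) _ hjmem,
      ← Finset.add_sum_erase (Finset.univ.erase j) _ himem,
      show (Finset.univ.erase j).erase i = (Finset.univ.erase i).erase j from
        Finset.erase_right_comm]
    have hsum : ∑ k ∈ (Finset.univ.erase i).erase j,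
        (L t i k * M t k j - M t i k * L t k j)
        = ∑ k ∈ (Finset.univ.erase i).erase j,
          ((∑ α : Fin l, b i t α * a k t α) * (∑ α : Fin l, b k t α * a j t α)
              / (x i t - x k t) ^ 2
            - (∑ α : Fin l, b i t α * a k t α) * (∑ α : Fin l, b k t α * a j t α)
              / (x j t - x k t) ^ 2) * (1 / (x i t - x j t) - 1 / z) := by
      refine Finset.sum_congr rfl fun k hk => ?_
      have hkj : k ≠ j := Finset.ne_of_mem_erase hk
      have hki : k ≠ i := Finset.ne_of_mem_erase (Finset.mem_of_mem_erase hk)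
      simp only [L, M, f, Matrix.of_apply, if_neg (Ne.symm hki), if_neg hkj,
        if_neg hij, if_neg (Ne.symm hkj), if_neg hki]
      have h1 := hne i k (Ne.symm hki)
      have h2 := hne k j hkj
      have h3 := hne j k (Ne.symm hkj)
      have h4 := hne i j hij
      field_simp
      ring
    rw [hsum, show
        (∑ k ∈ (Finset.univ.erase i).erase j,
          ((∑ α : Fin l, b i t α * a k t α) * (∑ α : Fin l, b k t α * a j t α)
              / (x i t - x k t) ^ 2
            - (∑ α : Fin l, b i t α * a k t α) * (∑ α : Fin l, b k t α * a j t α)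
              / (x j t - x k t) ^ 2) * (1 / (x i t - x j t) - 1 / z))
        = ((∑ k ∈ (Finset.univ.erase i).erase j,
            (∑ α : Fin l, b i t α * a k t α) * (∑ α : Fin l, b k t α * a j t α)
              / (x i t - x k t) ^ 2)
          - ∑ k ∈ (Finset.univ.erase i).erase j,
            (∑ α : Fin l, b i t α * a k t α) * (∑ α : Fin l, b k t α * a j t α)
              / (x j t - x k t) ^ 2) * (1 / (x i t - x j t) - 1 / z) from by
      rw [← Finset.sum_mul, Finset.sum_sub_distrib]]
    have eLii : L t i i = x' i t - 2 / z := by simp [L]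
    have eLjj : L t j j = x' j t - 2 / z := by simp [L]
    have eLij : L t i j
        = (∑ α : Fin l, b i t α * a j t α) * (1 / (x i t - x j t) - 1 / z) := by
      simp [L, f, hij]
    have eMii : M t i i = -lam i t := by simp [M]
    have eMjj : M t j j = -lam j t := by simp [M]
    have eMij : M t i j = -(∑ α : Fin l, b i t α * a j t α) / (x i t - x j t) ^ 2 := by
      simp [M, f, hij]
    rw [eLii, eLjj, eLij, eMii, eMjj, eMij]
    have hgij : ((x' i t - 2 / z) * (-(∑ α : Fin l, b i t α * a j t α) / (x i t - x j t) ^ 2)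
          - (-lam i t) * ((∑ α : Fin l, b i t α * a j t α) * (1 / (x i t - x j t) - 1 / z)))
        + (((∑ α : Fin l, b i t α * a j t α) * (1 / (x i t - x j t) - 1 / z)) * (-lam j t)
          - (-(∑ α : Fin l, b i t α * a j t α) / (x i t - x j t) ^ 2) * (x' j t - 2 / z))
        = ((∑ α : Fin l, b i t α * a j t α) * (∑ α : Fin l, b j t α * a j t α)
              / (x i t - x j t) ^ 2
          - (∑ α : Fin l, b i t α * a i t α) * (∑ α : Fin l, b i t α * a j t α)
              / (x j t - x i t) ^ 2
          + (lam i t - lam j t) * (∑ α : Fin l, b i t α * a j t α))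
            * (1 / (x i t - x j t) - 1 / z)
        + (∑ α : Fin l, b i t α * a j t α)
            * (-(x' i t - x' j t) / (x i t - x j t) ^ 2) := by
      rw [hba i t, hba j t,
        show (x j t - x i t) ^ 2 = (x i t - x j t) ^ 2 by ring]
      ring
    linear_combination hgij
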